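/- For all integers x ≥ 1 and m ≥ x+1, if c′ ∈ C(m+1,x) starts, from the left, with x+2 ones (Group 5), and c″ denotes the binary word formed by the m−x rightmost bits of c′, then c″ ∈ C(m−x,x) and g(m+1,x,c′) = g(m−x,x,c″) + N(m,x); that is, the shift in codeword indices for Group 5 is ζ₅ = N(m,x). -/

import Mathlib

/-- `noForbidden m x c` says the binary word `c = (c_{m-1}, …, c_0)` contains no contiguous
subword of the form `0 1^y 0` or `1 0^y 1` for any `1 ≤ y ≤ x`. -/
def noForbidden (m x : ℕ) (c : Fin m → Bool) : Prop :=
  ∀ j y : ℕ, 1 ≤ y → y ≤ x → (h : j + y + 1 < m) →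
    ¬ ((∀ k, 1 ≤ k → (hk : k ≤ y) → c ⟨j + k, by omega⟩ = ! c ⟨j, by omega⟩) ∧
        c ⟨j + y + 1, h⟩ = c ⟨j, by omega⟩)

/-- `N(m, x)`: the cardinality of the LOCO code `C(m, x)`. -/
noncomputable def locoN (m x : ℕ) : ℕ := Nat.card {c : Fin m → Bool // noForbidden m x c}

/-- `N(k, x)` extended to integer `k` by the convention `N(k, x) = 2` for `k ≤ 1`. -/
noncomputable def Nex (k : ℤ) (x : ℕ) : ℤ := if k ≤ 1 then 2 else (locoN k.toNat x : ℤ)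

/-- Strict lexicographic order on binary words, comparing bits from `c_{m-1}`
(most significant) down to `c_0`, with `0 < 1`. -/
def lexLt (m : ℕ) (d c : Fin m → Bool) : Prop :=
  ∃ i : Fin m, d i = false ∧ c i = true ∧ ∀ j : Fin m, (i : ℕ) < (j : ℕ) → d j = c j

/-- The index `g(m, x, c)` of a codeword: the number of codewords of `C(m, x)` that
precede `c` in lexicographic order. -/
noncomputable def locoIdx (m x : ℕ) (c : Fin m → Bool) : ℕ :=
  Nat.card {d : Fin m → Bool // noForbidden m x d ∧ lexLt m d c}

set_option linter.unusedVariables false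

lemma bit_congr {n : ℕ} (d : Fin n → Bool) {a b : ℕ} (h : a = b) (ha : a < n) (hb : b < n) :
    d ⟨a, ha⟩ = d ⟨b, hb⟩ := by subst h; rfl

lemma noForbidden_restrict {n x : ℕ} {d : Fin n → Bool} (hd : noForbidden n x d)
    (k : ℕ) (hk : k ≤ n) :
    noForbidden k x (fun i : Fin k => d ⟨(i : ℕ), lt_of_lt_of_le i.isLt hk⟩) := by
  intro j y hy1 hy2 h hcon
  exact hd j y hy1 hy2 (by omega) hcon

lemma zeroRun {n x : ℕ} {d : Fin n → Bool} (hd : noForbidden n x d) {p : ℕ}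
    (hp : p + 1 < n) (h1 : d ⟨p + 1, hp⟩ = true) (h0 : d ⟨p, by omega⟩ = false) :
    ∀ q (hqn : q < n), q ≤ p → p ≤ q + x → d ⟨q, hqn⟩ = false := by
  have key : ∀ t q (hqn : q < n) (hq : q ≤ p) (hpq : p = q + t) (htx : t ≤ x), d ⟨q, hqn⟩ = false := by
    intro t
    induction t using Nat.strong_induction_on with
    | _ t ih =>
      intro q hqn hq hpq htx
      rcases Nat.eq_zero_or_pos t with ht0 | ht1
      · obtain rfl : q = p := by omega
        exact h0
      · by_contra hcon
        have hcon' : d ⟨q, hqn⟩ = true := by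
          revert hcon; cases d ⟨q, hqn⟩ <;> simp
        refine hd q t ht1 htx (by omega) ⟨fun k hk1 hk2 => ?_, ?_⟩
        · have h2 := ih (t - k) (by omega) (q + k) (by omega) (by omega) (by omega) (by omega)
          rw [h2, hcon']
          rfl
        · rw [bit_congr d (show q + t + 1 = p + 1 by omega) (by omega) hp, h1, hcon']
  intro q hqn hq hqx
  exact key (p - q) q hqn hq (by omega) (by omega)

def resW (n k : ℕ) (hk : k ≤ n) (d : Fin n → Bool) : Fin k → Bool :=
  fun i => d ⟨(i : ℕ), lt_of_lt_of_le i.isLt hk⟩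

lemma noForbidden_resW {n x : ℕ} {d : Fin n → Bool} (hd : noForbidden n x d)
    (k : ℕ) (hk : k ≤ n) : noForbidden k x (resW n k hk d) := by
  intro j y hy1 hy2 h hcon
  exact hd j y hy1 hy2 (by omega) hcon

def wordOfF (m : ℕ) (f : Fin m → Bool) (b : Bool) : Fin (m + 1) → Bool :=
  fun i => if h : (i : ℕ) < m then f ⟨i, h⟩ else b

def wordOfE (m x : ℕ) (hm : x + 1 ≤ m) (e : Fin (m - x) → Bool) : Fin (m + 1) → Bool :=
  fun i => if h : (i : ℕ) < m - x then e ⟨i, h⟩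
    else (if e ⟨m - x - 1, by omega⟩ = true then true else decide ((i : ℕ) = m))

lemma wordOfF_lt {m : ℕ} (f : Fin m → Bool) (b : Bool) (i : ℕ) (hi : i < m)
    {hi' : i < m + 1} : wordOfF m f b ⟨i, hi'⟩ = f ⟨i, hi⟩ := dif_pos hi

lemma wordOfF_ge {m : ℕ} (f : Fin m → Bool) (b : Bool) (i : ℕ) (hi : ¬ i < m)
    {hi' : i < m + 1} : wordOfF m f b ⟨i, hi'⟩ = b := dif_neg hi

lemma wordOfE_lt {m x : ℕ} (hm : x + 1 ≤ m) (e : Fin (m - x) → Bool) (i : ℕ)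
    (hi : i < m - x) {hi' : i < m + 1} : wordOfE m x hm e ⟨i, hi'⟩ = e ⟨i, hi⟩ := dif_pos hi

lemma wordOfE_ge {m x : ℕ} (hm : x + 1 ≤ m) (e : Fin (m - x) → Bool) (i : ℕ)
    (hi : ¬ i < m - x) {hi' : i < m + 1} :
    wordOfE m x hm e ⟨i, hi'⟩
      = (if e ⟨m - x - 1, by omega⟩ = true then true else decide (i = m)) := dif_neg hi

def Rf (m x : ℕ) (hm1 : 1 ≤ m) (f : Fin m → Bool) : Prop :=
  f ⟨m - 1, by omega⟩ = true ∧ ∃ k, 1 ≤ k ∧ k ≤ x ∧ f ⟨m - 1 - k, by omega⟩ = false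

def Qd (m x : ℕ) (d : Fin (m + 1) → Bool) : Prop :=
  d ⟨m, by omega⟩ = true ∧
    (d ⟨m - 1, by omega⟩ = false ∨ ∀ k, k ≤ x + 1 → d ⟨m - k, Nat.lt_succ_of_le (Nat.sub_le m k)⟩ = true)

lemma nf_wordOfF_false {m x : ℕ} (hx : 1 ≤ x) (hm : x + 1 ≤ m) (f : Fin m → Bool)
    (hf : noForbidden m x f) (hnR : ¬ Rf m x (by omega) f) :
    noForbidden (m + 1) x (wordOfF m f false) := by
  intro j y hy1 hy2 h hcon
  obtain ⟨hmid, htop⟩ := hcon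
  by_cases hjy : j + y + 1 < m
  · refine hf j y hy1 hy2 hjy ⟨fun k hk1 hk2 => ?_, ?_⟩
    · have h2 := hmid k hk1 hk2
      rwa [wordOfF_lt f false (j + k) (by omega), wordOfF_lt f false j (by omega)] at h2
    · have h2 := htop
      rwa [wordOfF_lt f false (j + y + 1) (by omega), wordOfF_lt f false j (by omega)] at h2
  · have hjm : j + y + 1 = m := by omega
    rw [wordOfF_ge f false (j + y + 1) (by omega), wordOfF_lt f false j (by omega)] at htop
    apply hnR
    constructor
    · have h2 := hmid y hy1 le_rfl
      rw [wordOfF_lt f false (j + y) (by omega), wordOfF_lt f false j (by omega)] at h2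
      rw [bit_congr f (show m - 1 = j + y by omega) (by omega) (by omega), h2, ← htop]
      rfl
    · refine ⟨y, hy1, hy2, ?_⟩
      rw [bit_congr f (show m - 1 - y = j by omega) (by omega) (by omega)]
      exact htop.symm

lemma nf_wordOfF_true {m x : ℕ} (hx : 1 ≤ x) (hm : x + 1 ≤ m) (f : Fin m → Bool)
    (hf : noForbidden m x f) (hR1 : f ⟨m - 1, by omega⟩ = true) :
    noForbidden (m + 1) x (wordOfF m f true) := by
  intro j y hy1 hy2 h hcon
  obtain ⟨hmid, htop⟩ := hcon
  by_cases hjy : j + y + 1 < m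
  · refine hf j y hy1 hy2 hjy ⟨fun k hk1 hk2 => ?_, ?_⟩
    · have h2 := hmid k hk1 hk2
      rwa [wordOfF_lt f true (j + k) (by omega), wordOfF_lt f true j (by omega)] at h2
    · have h2 := htop
      rwa [wordOfF_lt f true (j + y + 1) (by omega), wordOfF_lt f true j (by omega)] at h2
  · have hjm : j + y + 1 = m := by omega
    rw [wordOfF_ge f true (j + y + 1) (by omega), wordOfF_lt f true j (by omega)] at htop
    have h2 := hmid y hy1 le_rfl
    rw [wordOfF_lt f true (j + y) (by omega), wordOfF_lt f true j (by omega), ← htop] at h2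
    rw [bit_congr f (show j + y = m - 1 by omega) (by omega) (by omega), hR1] at h2
    simp at h2

lemma nf_wordOfE {m x : ℕ} (hx : 1 ≤ x) (hm : x + 1 ≤ m) (e : Fin (m - x) → Bool)
    (he : noForbidden (m - x) x e) :
    noForbidden (m + 1) x (wordOfE m x hm e) := by
  intro j y hy1 hy2 h hcon
  obtain ⟨hmid, htop⟩ := hcon
  by_cases hjy : j + y + 1 < m - x
  · refine he j y hy1 hy2 hjy ⟨fun k hk1 hk2 => ?_, ?_⟩
    · have h2 := hmid k hk1 hk2
      rwa [wordOfE_lt hm e (j + k) (by omega), wordOfE_lt hm e j (by omega)] at h2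
    · have h2 := htop
      rwa [wordOfE_lt hm e (j + y + 1) (by omega), wordOfE_lt hm e j (by omega)] at h2
  · by_cases het : e ⟨m - x - 1, by omega⟩ = true
    · -- top bit of e is 1 : all positions ≥ m - x in w are 1
      have hwtop : wordOfE m x hm e ⟨j + y + 1, h⟩ = true := by
        rw [wordOfE_ge hm e (j + y + 1) hjy, if_pos het]
      rw [hwtop] at htop
      have hwj : wordOfE m x hm e ⟨j, by omega⟩ = true := htop.symm
      have hj1 : j + 1 < m - x := by
        by_contra hc
        have h2 := hmid 1 le_rfl hy1
        rw [wordOfE_ge hm e (j + 1) hc, if_pos het, hwj] at h2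
        simp at h2
      have hk0 := hmid (m - x - 1 - j) (by omega) (by omega)
      rw [bit_congr (wordOfE m x hm e) (show j + (m - x - 1 - j) = m - x - 1 by omega)
        (by omega) (by omega), wordOfE_lt hm e (m - x - 1) (by omega), het, hwj] at hk0
      simp at hk0
    · have hef : e ⟨m - x - 1, by omega⟩ = false := by
        revert het; cases e ⟨m - x - 1, by omega⟩ <;> simp
      by_cases hjm : j + y + 1 = m
      · have hwtop : wordOfE m x hm e ⟨j + y + 1, h⟩ = true := by
          rw [wordOfE_ge hm e (j + y + 1) hjy, if_neg (by simp [hef])]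
          simp [hjm]
        rw [hwtop] at htop
        have hjlt : j < m - x := by
          by_contra hc
          have := htop.symm
          rw [wordOfE_ge hm e j hc, if_neg (by simp [hef])] at this
          simp [show j ≠ m by omega] at this
        have hjj : j = m - x - 1 := by omega
        have hwj : e ⟨j, hjlt⟩ = true := by
          have := htop.symm
          rwa [wordOfE_lt hm e j hjlt] at this
        rw [bit_congr e hjj hjlt (by omega), hef] at hwj
        simp at hwj
      · -- m - x ≤ j + y + 1 ≤ m - 1
        have hwtop : wordOfE m x hm e ⟨j + y + 1, h⟩ = false := by
          rw [wordOfE_ge hm e (j + y + 1) hjy, if_neg (by simp [hef])]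
          simp [show j + y + 1 ≠ m by omega]
        rw [hwtop] at htop
        have hwj : wordOfE m x hm e ⟨j, by omega⟩ = false := htop.symm
        have hj1 : j + 1 < m - x := by
          by_contra hc
          have h2 := hmid 1 le_rfl hy1
          rw [hwj, wordOfE_ge hm e (j + 1) hc, if_neg (by simp [hef])] at h2
          simp [show j + 1 ≠ m by omega] at h2
        have hk0 := hmid (m - x - 1 - j) (by omega) (by omega)
        rw [bit_congr (wordOfE m x hm e) (show j + (m - x - 1 - j) = m - x - 1 by omega)
          (by omega) (by omega), wordOfE_lt hm e (m - x - 1) (by omega), hef, hwj] at hk0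
        simp at hk0

lemma lex_wordOfF_false {m x : ℕ} (hx : 1 ≤ x) (hm : x + 1 ≤ m) (c' : Fin (m + 1) → Bool)
    (h1 : ∀ k, k ≤ x + 1 → c' ⟨m - k, Nat.lt_succ_of_le (Nat.sub_le m k)⟩ = true) (f : Fin m → Bool) :
    lexLt (m + 1) (wordOfF m f false) c' := by
  refine ⟨⟨m, by omega⟩, ?_, ?_, ?_⟩
  · exact wordOfF_ge f false m (by omega)
  · exact h1 0 (by omega)
  · intro j hj
    have hj' : m < (j : ℕ) := hj
    exact absurd j.isLt (by omega)

lemma lex_wordOfF_true {m x : ℕ} (hx : 1 ≤ x) (hm : x + 1 ≤ m) (c' : Fin (m + 1) → Bool)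
    (h1 : ∀ k, k ≤ x + 1 → c' ⟨m - k, Nat.lt_succ_of_le (Nat.sub_le m k)⟩ = true)
    (f : Fin m → Bool) (hR : Rf m x (by omega) f) :
    lexLt (m + 1) (wordOfF m f true) c' := by
  obtain ⟨hR1, k0, hk01, hk0x, hk0f⟩ := hR
  have hex : ∃ k, f ⟨m - 1 - k, by omega⟩ = false := ⟨k0, hk0f⟩
  have hzspec : f ⟨m - 1 - Nat.find hex, by omega⟩ = false := Nat.find_spec hex
  have hzle : Nat.find hex ≤ k0 := Nat.find_min' hex hk0f
  set z := Nat.find hex with hzdef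
  have hz1 : 1 ≤ z := by
    rcases Nat.eq_zero_or_pos z with h0 | h
    · exfalso
      rw [bit_congr f (show m - 1 - Nat.find hex = m - 1 by omega) (by omega) (by omega), hR1]
        at hzspec
      simp at hzspec
    · exact h
  refine ⟨⟨m - 1 - z, by omega⟩, ?_, ?_, ?_⟩
  · rw [wordOfF_lt f true (m - 1 - z) (by omega)]; exact hzspec
  · have h2 := h1 (z + 1) (by omega)
    rwa [bit_congr c' (show m - (z + 1) = m - 1 - z by omega) (by omega) (by omega)] at h2
  · intro j hj
    have hj' : m - 1 - z < (j : ℕ) := hj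
    by_cases hjm : (j : ℕ) < m
    · have hwj : wordOfF m f true j = f ⟨(j : ℕ), hjm⟩ := dif_pos hjm
      have hfj : f ⟨(j : ℕ), hjm⟩ = true := by
        have h3 := Nat.find_min hex (show m - 1 - (j : ℕ) < z by omega)
        rw [bit_congr f (show m - 1 - (m - 1 - (j : ℕ)) = (j : ℕ) by omega)
          (by omega) hjm] at h3
        revert h3; cases f ⟨(j : ℕ), hjm⟩ <;> simp
      have hcj : c' j = true := by
        have h3 := h1 (m - (j : ℕ)) (by omega)
        rw [bit_congr c' (show m - (m - (j : ℕ)) = (j : ℕ) by omega) (by omega) j.isLt] at h3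
        exact h3
      rw [hwj, hfj, hcj]
    · have hwj : wordOfF m f true j = true := dif_neg hjm
      have hcj : c' j = true := by
        have h3 := h1 0 (by omega)
        rw [bit_congr c' (show m - 0 = (j : ℕ) by omega) (by omega) j.isLt] at h3
        exact h3
      rw [hwj, hcj]

lemma lex_wordOfE {m x : ℕ} (hx : 1 ≤ x) (hm : x + 1 ≤ m) (c' : Fin (m + 1) → Bool)
    (h1 : ∀ k, k ≤ x + 1 → c' ⟨m - k, Nat.lt_succ_of_le (Nat.sub_le m k)⟩ = true)
    (e : Fin (m - x) → Bool)
    (hlex : lexLt (m - x) e (resW (m + 1) (m - x) (by omega) c')) :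
    lexLt (m + 1) (wordOfE m x hm e) c' := by
  obtain ⟨i, hif, hic, hab⟩ := hlex
  by_cases het : e ⟨m - x - 1, by omega⟩ = true
  · refine ⟨⟨(i : ℕ), by omega⟩, ?_, ?_, ?_⟩
    · rw [wordOfE_lt hm e (i : ℕ) i.isLt]
      exact hif
    · exact hic
    · intro j hj
      have hj' : (i : ℕ) < (j : ℕ) := hj
      by_cases hjm : (j : ℕ) < m - x
      · have hwj : wordOfE m x hm e j = e ⟨(j : ℕ), hjm⟩ := dif_pos hjm
        have h2 := hab ⟨(j : ℕ), hjm⟩ hj'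
        rw [hwj, h2]
        rfl
      · have hwj : wordOfE m x hm e j = true := by
          have := wordOfE_ge hm e (j : ℕ) hjm (hi' := j.isLt)
          rw [if_pos het] at this
          exact this
        have hcj : c' j = true := by
          have h3 := h1 (m - (j : ℕ)) (by omega)
          rw [bit_congr c' (show m - (m - (j : ℕ)) = (j : ℕ) by omega) (by omega) j.isLt] at h3
          exact h3
        rw [hwj, hcj]
  · have hef : e ⟨m - x - 1, by omega⟩ = false := by
      revert het; cases e ⟨m - x - 1, by omega⟩ <;> simp
    refine ⟨⟨m - 1, by omega⟩, ?_, ?_, ?_⟩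
    · rw [wordOfE_ge hm e (m - 1) (by omega), if_neg (by simp [hef])]
      simp [show ¬ m - 1 = m by omega]
    · exact h1 1 (by omega)
    · intro j hj
      have hj' : m - 1 < (j : ℕ) := hj
      have hjm : (j : ℕ) = m := by omega
      have hwj : wordOfE m x hm e j = true := by
        have := wordOfE_ge hm e (j : ℕ) (by omega) (hi' := j.isLt)
        rw [if_neg (by simp [hef])] at this
        rw [this]
        simp [hjm]
      have hcj : c' j = true := by
        have h3 := h1 0 (by omega)
        rw [bit_congr c' (show m - 0 = (j : ℕ) by omega) (by omega) j.isLt] at h3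
        exact h3
      rw [hwj, hcj]

lemma lex_res {m x : ℕ} (hx : 1 ≤ x) (hm : x + 1 ≤ m) (c' : Fin (m + 1) → Bool)
    (h1 : ∀ k, k ≤ x + 1 → c' ⟨m - k, Nat.lt_succ_of_le (Nat.sub_le m k)⟩ = true)
    (d : Fin (m + 1) → Bool) (hd : noForbidden (m + 1) x d)
    (hlex : lexLt (m + 1) d c') (hQ : Qd m x d) :
    lexLt (m - x) (resW (m + 1) (m - x) (by omega) d) (resW (m + 1) (m - x) (by omega) c') := by
  obtain ⟨hdm, hQ2⟩ := hQ
  by_cases hdm1 : d ⟨m - 1, by omega⟩ = false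
  · have hdm' : d ⟨m - 1 + 1, by omega⟩ = true := by
      rw [bit_congr d (show m - 1 + 1 = m by omega) (by omega) (by omega)]
      exact hdm
    have hz := zeroRun hd (show m - 1 + 1 < m + 1 by omega) hdm' hdm1
    refine ⟨⟨m - x - 1, by omega⟩, ?_, ?_, ?_⟩
    · exact hz (m - x - 1) (by omega) (by omega) (by omega)
    · show c' ⟨m - x - 1, by omega⟩ = true
      have h2 := h1 (x + 1) le_rfl
      rwa [bit_congr c' (show m - (x + 1) = m - x - 1 by omega) (by omega) (by omega)] at h2
    · intro j hj
      have hj' : m - x - 1 < (j : ℕ) := hj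
      exact absurd j.isLt (by omega)
  · have hall : ∀ k, k ≤ x + 1 → d ⟨m - k, Nat.lt_succ_of_le (Nat.sub_le m k)⟩ = true := hQ2.resolve_left hdm1
    obtain ⟨i, hif, hic, hab⟩ := hlex
    have hilt : (i : ℕ) < m - x := by
      by_contra hc
      have h2 := hall (m - (i : ℕ)) (by omega)
      rw [bit_congr d (show m - (m - (i : ℕ)) = (i : ℕ) by omega) (by omega) i.isLt] at h2
      rw [show d ⟨(i : ℕ), i.isLt⟩ = d i from rfl, hif] at h2
      simp at h2
    refine ⟨⟨(i : ℕ), hilt⟩, ?_, ?_, ?_⟩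
    · exact hif
    · exact hic
    · intro j hj
      have hj' : (i : ℕ) < (j : ℕ) := hj
      exact hab ⟨(j : ℕ), by omega⟩ hj'

lemma resE_eq {m x : ℕ} (hx : 1 ≤ x) (hm : x + 1 ≤ m) (e : Fin (m - x) → Bool) :
    resW (m + 1) (m - x) (by omega) (wordOfE m x hm e) = e := by
  funext i
  show wordOfE m x hm e ⟨(i : ℕ), by omega⟩ = e i
  rw [wordOfE_lt hm e (i : ℕ) i.isLt]

lemma resF_eq {m : ℕ} (f : Fin m → Bool) (b : Bool) :
    resW (m + 1) m (by omega) (wordOfF m f b) = f := by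
  funext i
  show wordOfF m f b ⟨(i : ℕ), by omega⟩ = f i
  rw [wordOfF_lt f b (i : ℕ) i.isLt]

lemma QofE {m x : ℕ} (hx : 1 ≤ x) (hm : x + 1 ≤ m) (e : Fin (m - x) → Bool) :
    Qd m x (wordOfE m x hm e) := by
  constructor
  · rw [wordOfE_ge hm e m (by omega)]
    by_cases het : e ⟨m - x - 1, by omega⟩ = true
    · rw [if_pos het]
    · rw [if_neg het]; simp
  · by_cases het : e ⟨m - x - 1, by omega⟩ = true
    · right
      intro k hk
      by_cases hik : m - k < m - x
      · rw [wordOfE_lt hm e (m - k) hik,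
          bit_congr e (show m - k = m - x - 1 by omega) hik (by omega)]
        exact het
      · rw [wordOfE_ge hm e (m - k) hik, if_pos het]
    · left
      rw [wordOfE_ge hm e (m - 1) (by omega), if_neg het]
      simp [show ¬ m - 1 = m by omega]

lemma NQofF_false {m x : ℕ} (hx : 1 ≤ x) (hm : x + 1 ≤ m) (f : Fin m → Bool) :
    ¬ Qd m x (wordOfF m f false) := by
  rintro ⟨hQ1, -⟩
  rw [wordOfF_ge f false m (by omega)] at hQ1
  simp at hQ1

lemma NQofF_true {m x : ℕ} (hx : 1 ≤ x) (hm : x + 1 ≤ m) (f : Fin m → Bool)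
    (hR : Rf m x (by omega) f) : ¬ Qd m x (wordOfF m f true) := by
  rintro ⟨-, hQ2⟩
  obtain ⟨hR1, k0, hk01, hk0x, hk0f⟩ := hR
  rcases hQ2 with h2 | h2
  · rw [wordOfF_lt f true (m - 1) (by omega), hR1] at h2
    simp at h2
  · have h3 := h2 (k0 + 1) (by omega)
    rw [wordOfF_lt f true (m - (k0 + 1)) (by omega),
      bit_congr f (show m - (k0 + 1) = m - 1 - k0 by omega) (by omega) (by omega), hk0f] at h3
    simp at h3

lemma rebuildE_all {m x : ℕ} (hx : 1 ≤ x) (hm : x + 1 ≤ m) (d : Fin (m + 1) → Bool)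
    (hall : ∀ k, k ≤ x + 1 → d ⟨m - k, Nat.lt_succ_of_le (Nat.sub_le m k)⟩ = true) :
    wordOfE m x hm (resW (m + 1) (m - x) (by omega) d) = d := by
  have het : resW (m + 1) (m - x) (by omega) d ⟨m - x - 1, by omega⟩ = true := by
    show d ⟨m - x - 1, by omega⟩ = true
    have h2 := hall (x + 1) le_rfl
    rwa [bit_congr d (show m - (x + 1) = m - x - 1 by omega) (by omega) (by omega)] at h2
  funext i
  by_cases hi : (i : ℕ) < m - x
  · have h2 : wordOfE m x hm (resW (m + 1) (m - x) (by omega) d) i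
        = resW (m + 1) (m - x) (by omega) d ⟨(i : ℕ), hi⟩ := dif_pos hi
    rw [h2]
    show d ⟨(i : ℕ), by omega⟩ = d i
    rfl
  · have h2 := wordOfE_ge hm (resW (m + 1) (m - x) (by omega) d) (i : ℕ) hi (hi' := i.isLt)
    rw [if_pos het] at h2
    rw [h2]
    have h3 := hall (m - (i : ℕ)) (by omega)
    rw [bit_congr d (show m - (m - (i : ℕ)) = (i : ℕ) by omega) (by omega) i.isLt] at h3
    exact h3.symm

lemma rebuildE_zero {m x : ℕ} (hx : 1 ≤ x) (hm : x + 1 ≤ m) (d : Fin (m + 1) → Bool)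
    (hd : noForbidden (m + 1) x d) (hdm : d ⟨m, by omega⟩ = true)
    (hdm1 : d ⟨m - 1, by omega⟩ = false) :
    wordOfE m x hm (resW (m + 1) (m - x) (by omega) d) = d := by
  have hdm' : d ⟨m - 1 + 1, by omega⟩ = true := by
    rw [bit_congr d (show m - 1 + 1 = m by omega) (by omega) (by omega)]
    exact hdm
  have hz := zeroRun hd (show m - 1 + 1 < m + 1 by omega) hdm' hdm1
  have hef : resW (m + 1) (m - x) (by omega) d ⟨m - x - 1, by omega⟩ = false := by
    show d ⟨m - x - 1, by omega⟩ = false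
    exact hz (m - x - 1) (by omega) (by omega) (by omega)
  funext i
  by_cases hi : (i : ℕ) < m - x
  · have h2 : wordOfE m x hm (resW (m + 1) (m - x) (by omega) d) i
        = resW (m + 1) (m - x) (by omega) d ⟨(i : ℕ), hi⟩ := dif_pos hi
    rw [h2]
    rfl
  · have h2 := wordOfE_ge hm (resW (m + 1) (m - x) (by omega) d) (i : ℕ) hi (hi' := i.isLt)
    rw [if_neg (by rw [hef]; simp)] at h2
    rw [h2]
    by_cases him : (i : ℕ) = m
    · rw [bit_congr d him.symm (by omega) i.isLt] at hdm
      rw [hdm]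
      simp [him]
    · have h3 := hz (i : ℕ) i.isLt (by omega) (by omega)
      rw [h3]
      simp [him]

lemma rebuildF_zero {m x : ℕ} (hx : 1 ≤ x) (hm : x + 1 ≤ m) (d : Fin (m + 1) → Bool)
    (hdm : d ⟨m, by omega⟩ = false) :
    wordOfF m (resW (m + 1) m (by omega) d) false = d := by
  funext i
  by_cases hi : (i : ℕ) < m
  · have h2 : wordOfF m (resW (m + 1) m (by omega) d) false i
        = resW (m + 1) m (by omega) d ⟨(i : ℕ), hi⟩ := dif_pos hi
    rw [h2]
    rfl
  · have h2 : wordOfF m (resW (m + 1) m (by omega) d) false i = false := dif_neg hi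
    rw [h2]
    rw [bit_congr d (show m = (i : ℕ) by omega) (by omega) i.isLt] at hdm
    exact hdm.symm

lemma rebuildF_one {m x : ℕ} (hx : 1 ≤ x) (hm : x + 1 ≤ m) (d : Fin (m + 1) → Bool)
    (hdm : d ⟨m, by omega⟩ = true) :
    wordOfF m (resW (m + 1) m (by omega) d) true = d := by
  funext i
  by_cases hi : (i : ℕ) < m
  · have h2 : wordOfF m (resW (m + 1) m (by omega) d) true i
        = resW (m + 1) m (by omega) d ⟨(i : ℕ), hi⟩ := dif_pos hi
    rw [h2]
    rfl
  · have h2 : wordOfF m (resW (m + 1) m (by omega) d) true i = true := dif_neg hi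
    rw [h2]
    rw [bit_congr d (show m = (i : ℕ) by omega) (by omega) i.isLt] at hdm
    exact hdm.symm

lemma notR_of_dzero {m x : ℕ} (hx : 1 ≤ x) (hm : x + 1 ≤ m) (d : Fin (m + 1) → Bool)
    (hd : noForbidden (m + 1) x d) (hdm : d ⟨m, by omega⟩ = false) :
    ¬ Rf m x (by omega) (resW (m + 1) m (by omega) d) := by
  rintro ⟨hR1, k0, hk01, hk0x, hk0f⟩
  have hR1' : d ⟨m - 1, by omega⟩ = true := hR1
  have hex : ∃ k, d ⟨m - 1 - k, by omega⟩ = false := ⟨k0, hk0f⟩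
  have hzspec : d ⟨m - 1 - Nat.find hex, by omega⟩ = false := Nat.find_spec hex
  have hzle : Nat.find hex ≤ k0 := Nat.find_min' hex hk0f
  set z := Nat.find hex with hzdef
  have hz1 : 1 ≤ z := by
    rcases Nat.eq_zero_or_pos z with h0 | h
    · exfalso
      rw [bit_congr d (show m - 1 - Nat.find hex = m - 1 by omega) (by omega) (by omega), hR1']
        at hzspec
      simp at hzspec
    · exact h
  refine hd (m - 1 - z) z hz1 (by omega) (by omega) ⟨fun k hk1 hk2 => ?_, ?_⟩
  · have h3 := Nat.find_min hex (show z - k < z by omega)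
    have h4 : d ⟨m - 1 - (z - k), by omega⟩ = true := by
      revert h3; cases d ⟨m - 1 - (z - k), by omega⟩ <;> simp
    rw [bit_congr d (show m - 1 - z + k = m - 1 - (z - k) by omega) (by omega) (by omega), h4,
      hzspec]
    rfl
  · rw [bit_congr d (show m - 1 - z + z + 1 = m by omega) (by omega) (by omega), hdm, hzspec]

lemma R_of_notQ {m x : ℕ} (hx : 1 ≤ x) (hm : x + 1 ≤ m) (d : Fin (m + 1) → Bool)
    (hdm : d ⟨m, by omega⟩ = true) (hdm1 : d ⟨m - 1, by omega⟩ = true)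
    (hk : ∃ k, k ≤ x + 1 ∧ d ⟨m - k, Nat.lt_succ_of_le (Nat.sub_le m k)⟩ = false) :
    Rf m x (by omega) (resW (m + 1) m (by omega) d) := by
  obtain ⟨k, hkx, hkf⟩ := hk
  have hk2 : 2 ≤ k := by
    by_contra h
    rcases (by omega : k = 0 ∨ k = 1) with rfl | rfl
    · rw [bit_congr d (show m - 0 = m by omega) (by omega) (by omega), hdm] at hkf
      simp at hkf
    · rw [hdm1] at hkf
      simp at hkf
  refine ⟨hdm1, k - 1, by omega, by omega, ?_⟩
  show d ⟨m - 1 - (k - 1), by omega⟩ = false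
  rwa [bit_congr d (show m - 1 - (k - 1) = m - k by omega) (by omega) (by omega)]

open Classical in
noncomputable def PhiMap (m x : ℕ) (hx : 1 ≤ x) (hm : x + 1 ≤ m) (c' : Fin (m + 1) → Bool)
    (h1 : ∀ k, k ≤ x + 1 → c' ⟨m - k, Nat.lt_succ_of_le (Nat.sub_le m k)⟩ = true) :
    {d : Fin (m + 1) → Bool // noForbidden (m + 1) x d ∧ lexLt (m + 1) d c'} →
      ({e : Fin (m - x) → Bool // noForbidden (m - x) x e ∧
          lexLt (m - x) e (resW (m + 1) (m - x) (by omega) c')} ⊕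
        {f : Fin m → Bool // noForbidden m x f}) := fun d =>
  if hQ : Qd m x d.1 then
    Sum.inl ⟨resW (m + 1) (m - x) (by omega) d.1,
      noForbidden_resW d.2.1 (m - x) (by omega),
      lex_res hx hm c' h1 d.1 d.2.1 d.2.2 hQ⟩
  else Sum.inr ⟨resW (m + 1) m (by omega) d.1, noForbidden_resW d.2.1 m (by omega)⟩

open Classical in
noncomputable def PsiMap (m x : ℕ) (hx : 1 ≤ x) (hm : x + 1 ≤ m) (c' : Fin (m + 1) → Bool)
    (h1 : ∀ k, k ≤ x + 1 → c' ⟨m - k, Nat.lt_succ_of_le (Nat.sub_le m k)⟩ = true) :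
    ({e : Fin (m - x) → Bool // noForbidden (m - x) x e ∧
          lexLt (m - x) e (resW (m + 1) (m - x) (by omega) c')} ⊕
        {f : Fin m → Bool // noForbidden m x f}) →
      {d : Fin (m + 1) → Bool // noForbidden (m + 1) x d ∧ lexLt (m + 1) d c'} := fun t =>
  match t with
  | Sum.inl e => ⟨wordOfE m x hm e.1, nf_wordOfE hx hm e.1 e.2.1,
      lex_wordOfE hx hm c' h1 e.1 e.2.2⟩
  | Sum.inr f =>
    if hR : Rf m x (by omega) f.1 then
      ⟨wordOfF m f.1 true, nf_wordOfF_true hx hm f.1 f.2 hR.1,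
        lex_wordOfF_true hx hm c' h1 f.1 hR⟩
    else
      ⟨wordOfF m f.1 false, nf_wordOfF_false hx hm f.1 f.2 hR,
        lex_wordOfF_false hx hm c' h1 f.1⟩

lemma psi_phi (m x : ℕ) (hx : 1 ≤ x) (hm : x + 1 ≤ m) (c' : Fin (m + 1) → Bool)
    (h1 : ∀ k, k ≤ x + 1 → c' ⟨m - k, Nat.lt_succ_of_le (Nat.sub_le m k)⟩ = true) :
    Function.LeftInverse (PsiMap m x hx hm c' h1) (PhiMap m x hx hm c' h1) := by
  rintro ⟨d, hd, hlex⟩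
  by_cases hQ : Qd m x d
  · rw [PhiMap, dif_pos hQ, PsiMap]
    apply Subtype.ext
    obtain ⟨hdm, hQ2⟩ := hQ
    by_cases hdm1 : d ⟨m - 1, by omega⟩ = false
    · exact rebuildE_zero hx hm d hd hdm hdm1
    · exact rebuildE_all hx hm d (hQ2.resolve_left hdm1)
  · rw [PhiMap, dif_neg hQ, PsiMap]
    by_cases hdm : d ⟨m, by omega⟩ = true
    · have hdm1 : d ⟨m - 1, by omega⟩ = true := by
        by_contra h
        have h' : d ⟨m - 1, by omega⟩ = false := by
          revert h; cases d ⟨m - 1, by omega⟩ <;> simp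
        exact hQ ⟨hdm, Or.inl h'⟩
      have hex : ∃ k, k ≤ x + 1 ∧ d ⟨m - k, Nat.lt_succ_of_le (Nat.sub_le m k)⟩ = false := by
        by_contra h
        push_neg at h
        refine hQ ⟨hdm, Or.inr fun k hk => ?_⟩
        have := h k hk
        revert this; cases d ⟨m - k, Nat.lt_succ_of_le (Nat.sub_le m k)⟩ <;> simp
      have hR := R_of_notQ hx hm d hdm hdm1 hex
      rw [dif_pos hR]
      exact Subtype.ext (rebuildF_one hx hm d hdm)
    · have hdm' : d ⟨m, by omega⟩ = false := by
        revert hdm; cases d ⟨m, by omega⟩ <;> simp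
      have hnR := notR_of_dzero hx hm d hd hdm'
      rw [dif_neg hnR]
      exact Subtype.ext (rebuildF_zero hx hm d hdm')

lemma phi_psi (m x : ℕ) (hx : 1 ≤ x) (hm : x + 1 ≤ m) (c' : Fin (m + 1) → Bool)
    (h1 : ∀ k, k ≤ x + 1 → c' ⟨m - k, Nat.lt_succ_of_le (Nat.sub_le m k)⟩ = true) :
    Function.RightInverse (PsiMap m x hx hm c' h1) (PhiMap m x hx hm c' h1) := by
  rintro (⟨e, he, hel⟩ | ⟨f, hf⟩)
  · rw [PsiMap, PhiMap, dif_pos (QofE hx hm e)]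
    exact congrArg Sum.inl (Subtype.ext (resE_eq hx hm e))
  · rw [PsiMap]
    by_cases hR : Rf m x (by omega) f
    · rw [dif_pos hR, PhiMap, dif_neg (NQofF_true hx hm f hR)]
      exact congrArg Sum.inr (Subtype.ext (resF_eq f true))
    · rw [dif_neg hR, PhiMap, dif_neg (NQofF_false hx hm f)]
      exact congrArg Sum.inr (Subtype.ext (resF_eq f false))

/-- For all `x ≥ 1` and `m ≥ x + 1`, if `c' ∈ C(m + 1, x)` starts from the
left with `x + 2` ones (Group 5), and `c''` is the word formed by the `m - x` rightmost bits
of `c'`, then `c'' ∈ C(m - x, x)` and `g(m + 1, x, c') = g(m - x, x, c'') + N(m, x)`,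
i.e. the index shift is `ζ₅ = N(m, x)`. -/
theorem loco_group5_shift (m x : ℕ) (hx : 1 ≤ x) (hm : x + 1 ≤ m)
    (c' : Fin (m + 1) → Bool) (hc' : noForbidden (m + 1) x c')
    (h1 : ∀ k, k ≤ x + 1 → c' ⟨m - k, by omega⟩ = true) :
    noForbidden (m - x) x
      (fun i : Fin (m - x) => c' ⟨(i : ℕ), lt_of_lt_of_le i.isLt (by omega)⟩) ∧
    (locoIdx (m + 1) x c' : ℤ)
      = (locoIdx (m - x) x
          (fun i : Fin (m - x) => c' ⟨(i : ℕ), lt_of_lt_of_le i.isLt (by omega)⟩) : ℤ)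
        + Nex (m : ℤ) x := by
  constructor
  · exact noForbidden_resW hc' (m - x) (by omega)
  · have E : {d : Fin (m + 1) → Bool // noForbidden (m + 1) x d ∧ lexLt (m + 1) d c'} ≃
        ({e : Fin (m - x) → Bool // noForbidden (m - x) x e ∧
            lexLt (m - x) e (resW (m + 1) (m - x) (by omega) c')} ⊕
          {f : Fin m → Bool // noForbidden m x f}) :=
      ⟨PhiMap m x hx hm c' h1, PsiMap m x hx hm c' h1,
        psi_phi m x hx hm c' h1, phi_psi m x hx hm c' h1⟩
    have key : locoIdx (m + 1) x c'
        = locoIdx (m - x) x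
            (fun i : Fin (m - x) => c' ⟨(i : ℕ), lt_of_lt_of_le i.isLt (by omega)⟩)
          + locoN m x := by
      have h2 := Nat.card_congr E
      rw [Nat.card_sum] at h2
      exact h2
    have hNex : Nex (m : ℤ) x = (locoN m x : ℤ) := by
      rw [Nex, if_neg (by omega : ¬ (m : ℤ) ≤ 1)]
      simp
    rw [hNex, key]
    push_cast
    ring
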